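/- Let $\ell_n$ denote the number of $n$-step self-avoiding walks on the ladder graph $\mathbb{L}$ (the graph $\mathbb{Z} \times \{0,1\}$ with nearest-neighbour edges) starting from a fixed vertex. Then $\lim_{n\to\infty} \ell_n^{1/n} = \frac{1+\sqrt 5}{2}$, the golden mean. -/

import Mathlib

open Filter

/-- The ladder graph `ℤ × {0,1}`: `(i,a) ~ (j,b)` iff `|i-j| = 1` and `a = b`,
or `i = j` and `a ≠ b`. -/
def ladderGraph : SimpleGraph (ℤ × Bool) where
  Adj p q := (|p.1 - q.1| = 1 ∧ p.2 = q.2) ∨ (p.1 = q.1 ∧ p.2 ≠ q.2)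
  symm := by
    refine ⟨?_⟩
    rintro ⟨i, a⟩ ⟨j, b⟩ (⟨h1, h2⟩ | ⟨h1, h2⟩)
    · exact Or.inl ⟨by rw [abs_sub_comm]; exact h1, h2.symm⟩
    · exact Or.inr ⟨h1.symm, h2.symm⟩
  loopless := by
    refine ⟨?_⟩
    rintro ⟨i, a⟩ (⟨h1, _⟩ | ⟨_, h2⟩)
    · simp at h1
    · exact h2 rfl

/-- The number of `n`-step self-avoiding walks on the ladder from `(0, false)`. -/
noncomputable def ladderSawCount (n : ℕ) : ℕ :=
  Nat.card {p : Fin (n + 1) → ℤ × Bool // p 0 = (0, false) ∧ Function.Injective p ∧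
    ∀ i : Fin n, ladderGraph.Adj (p i.castSucc) (p i.succ)}


/-- no two adjacent `true`s in a bitstring -/
def NoTwo {n : ℕ} (g : Fin n → Bool) : Prop :=
  ∀ (i : ℕ) (h : i + 1 < n), ¬(g ⟨i, by omega⟩ = true ∧ g ⟨i + 1, h⟩ = true)

lemma noTwo_init {n : ℕ} {g : Fin (n+1) → Bool} (hg : NoTwo g) : NoTwo (Fin.init g) := by
  intro i h hc
  exact hg i (by omega) ⟨by simpa [Fin.init] using hc.1, by simpa [Fin.init] using hc.2⟩

lemma noTwo_snoc_false {n : ℕ} {g : Fin n → Bool} (hg : NoTwo g) :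
    NoTwo (Fin.snoc g false : Fin (n+1) → Bool) := by
  intro i h hc
  rcases lt_or_eq_of_le (Nat.lt_succ_iff.mp h) with h' | h'
  · refine hg i h' ⟨?_, ?_⟩
    · have := hc.1
      rwa [show (⟨i, by omega⟩ : Fin (n+1)) = Fin.castSucc ⟨i, by omega⟩ from rfl,
        Fin.snoc_castSucc] at this
    · have := hc.2
      rwa [show (⟨i+1, h⟩ : Fin (n+1)) = Fin.castSucc ⟨i+1, h'⟩ from rfl,
        Fin.snoc_castSucc] at this
  · have := hc.2
    rw [show (⟨i+1, h⟩ : Fin (n+1)) = Fin.last n from by ext; simp [h'], Fin.snoc_last] at this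
    simp at this

lemma noTwo_snoc_true {n : ℕ} {g : Fin (n+1) → Bool} (hg : NoTwo g)
    (hlast : g (Fin.last n) = false) :
    NoTwo (Fin.snoc g true : Fin (n+2) → Bool) := by
  intro i h hc
  rcases lt_or_eq_of_le (Nat.lt_succ_iff.mp h) with h' | h'
  · refine hg i h' ⟨?_, ?_⟩
    · have := hc.1
      rwa [show (⟨i, by omega⟩ : Fin (n+2)) = Fin.castSucc ⟨i, by omega⟩ from rfl,
        Fin.snoc_castSucc] at this
    · have := hc.2
      rwa [show (⟨i+1, h⟩ : Fin (n+2)) = Fin.castSucc ⟨i+1, h'⟩ from rfl,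
        Fin.snoc_castSucc] at this
  · -- i + 1 = n + 1, so i = n : g i = g last = false
    have := hc.1
    rw [show (⟨i, by omega⟩ : Fin (n+2)) = Fin.castSucc ⟨i, by omega⟩ from rfl,
      Fin.snoc_castSucc] at this
    have : g (Fin.last n) = true := by
      convert this using 2
      ext; simp [h']; omega
    rw [hlast] at this; simp at this

/-- number of bitstrings of length n without two adjacent trues -/
noncomputable def cardA (n : ℕ) : ℕ := Nat.card {g : Fin n → Bool // NoTwo g}

noncomputable def splitEquiv (n : ℕ) :
    {g : Fin (n+2) → Bool // NoTwo g} ≃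
      {g : Fin (n+1) → Bool // NoTwo g} ⊕ {g : Fin n → Bool // NoTwo g} := by
  classical
  refine
  { toFun := fun g =>
      if hl : g.1 (Fin.last (n+1)) = true then
        Sum.inr ⟨Fin.init (Fin.init g.1), noTwo_init (noTwo_init g.2)⟩
      else Sum.inl ⟨Fin.init g.1, noTwo_init g.2⟩
    invFun := fun g =>
      match g with
      | Sum.inl g => ⟨Fin.snoc g.1 false, noTwo_snoc_false g.2⟩
      | Sum.inr g => ⟨Fin.snoc (Fin.snoc g.1 false) true,
          noTwo_snoc_true (noTwo_snoc_false g.2) (by simp)⟩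
    left_inv := ?_
    right_inv := ?_ }
  · rintro ⟨g, hg⟩
    apply Subtype.ext
    by_cases hl : g (Fin.last (n+1)) = true
    · simp only [hl, dif_pos]
      have hsl : g (Fin.castSucc (Fin.last n)) = false := by
        by_contra hx
        exact hg n (by omega) ⟨by simpa [Fin.ext_iff, Fin.castSucc, Fin.last] using
            (Bool.not_eq_false _).mp hx,
          by simpa [Fin.ext_iff, Fin.last] using hl⟩
      have h1 : Fin.snoc (Fin.init (Fin.init g)) false = Fin.init g := by
        rw [show (false : Bool) = Fin.init g (Fin.last n) from by
          simp [Fin.init, hsl], Fin.snoc_init_self]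
      rw [h1, show (true : Bool) = g (Fin.last (n+1)) from hl.symm, Fin.snoc_init_self]
    · simp only [dif_neg hl]
      rw [show (false : Bool) = g (Fin.last (n+1)) from (Bool.not_eq_true _).mp hl |>.symm,
        Fin.snoc_init_self]
  · rintro (⟨g, hg⟩ | ⟨g, hg⟩)
    · simp [Fin.snoc_last, Fin.init_snoc]
    · simp [Fin.snoc_last, Fin.init_snoc]

lemma cardA_rec (n : ℕ) : cardA (n+2) = cardA (n+1) + cardA n := by
  have := Nat.card_congr (splitEquiv n)
  rw [Nat.card_sum] at this
  simpa [cardA] using this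

lemma cardA_zero : cardA 0 = 1 := by
  have : Unique {g : Fin 0 → Bool // NoTwo g} := by
    refine ⟨⟨⟨fun i => i.elim0, by intro i h; omega⟩⟩, ?_⟩
    rintro ⟨g, hg⟩
    ext i; exact i.elim0
  simp [cardA, Nat.card_unique]

lemma cardA_one : cardA 1 = 2 := by
  have e : {g : Fin 1 → Bool // NoTwo g} ≃ Bool := by
    refine ⟨fun g => g.1 0, fun b => ⟨fun _ => b, by intro i h; omega⟩, ?_, ?_⟩
    · rintro ⟨g, hg⟩; apply Subtype.ext; funext i
      have : i = 0 := Subsingleton.elim _ _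
      rw [this]
    · intro b; rfl
  rw [cardA, Nat.card_congr e]
  simp

lemma cardA_eq_fib : ∀ n, cardA n = Nat.fib (n + 2)
  | 0 => by simp [cardA_zero]
  | 1 => by simp [cardA_one]; rfl
  | (n+2) => by
      rw [cardA_rec, cardA_eq_fib n, cardA_eq_fib (n+1)]
      have h1 : Nat.fib (n+2+2) = Nat.fib (n+2) + Nat.fib (n+2+1) := Nat.fib_add_two
      have h2 : n+1+2 = n+2+1 := by omega
      rw [h2, h1]
      omega

noncomputable def phiR : ℝ := (1 + Real.sqrt 5) / 2

lemma sqrt5_lb : (2:ℝ) ≤ Real.sqrt 5 := by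
  have : ((2:ℝ))^2 ≤ 5 := by norm_num
  nlinarith [Real.sq_sqrt (by norm_num : (5:ℝ) ≥ 0), Real.sqrt_nonneg 5]

lemma sqrt5_ub : Real.sqrt 5 ≤ 3 := by
  nlinarith [Real.sq_sqrt (by norm_num : (5:ℝ) ≥ 0), Real.sqrt_nonneg 5]

lemma phiR_gt_one : (1:ℝ) < phiR := by
  have := sqrt5_lb; rw [phiR]; linarith

lemma phiR_pos : (0:ℝ) < phiR := lt_trans one_pos phiR_gt_one

lemma phiR_le_two : phiR ≤ 2 := by
  have := sqrt5_ub; rw [phiR]; linarith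

lemma phiR_sq : phiR ^ 2 = phiR + 1 := by
  have h5 : Real.sqrt 5 ^ 2 = 5 := Real.sq_sqrt (by norm_num)
  rw [phiR]; ring_nf; nlinarith [h5]

lemma fib_bounds : ∀ n : ℕ, phiR ^ n ≤ (Nat.fib (n+2) : ℝ) ∧ (Nat.fib (n+2) : ℝ) ≤ phiR ^ (n+1)
  | 0 => by
      have h1 : (Nat.fib 2 : ℝ) = 1 := by norm_num [Nat.fib]
      rw [show (0:ℕ)+2 = 2 from rfl, h1]
      norm_num
      exact le_of_lt phiR_gt_one
  | 1 => by
      have h1 : (Nat.fib 3 : ℝ) = 2 := by norm_num [Nat.fib]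
      constructor
      · rw [pow_one]; rw [show (1:ℕ)+2 = 3 from rfl, h1]; exact phiR_le_two
      · rw [show (1:ℕ)+2 = 3 from rfl, h1, show (1:ℕ)+1 = 2 from rfl, phiR_sq]
        linarith [phiR_gt_one]
  | (n+2) => by
      obtain ⟨l1, u1⟩ := fib_bounds n
      obtain ⟨l2, u2⟩ := fib_bounds (n+1)
      have hrec : (Nat.fib (n+2+2) : ℝ) = (Nat.fib (n+2) : ℝ) + (Nat.fib (n+1+2) : ℝ) := by
        rw [show n+2+2 = (n+2)+2 from rfl, Nat.fib_add_two]
        push_cast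
        ring
      have hpow : phiR ^ (n+2) = phiR ^ n + phiR ^ (n+1) := by
        have : phiR ^ (n+2) = phiR ^ n * phiR ^ 2 := by ring
        rw [this, phiR_sq]; ring
      have hpow2 : phiR ^ (n+3) = phiR ^ (n+1) + phiR ^ (n+2) := by
        have : phiR ^ (n+3) = phiR ^ (n+1) * phiR ^ 2 := by ring
        rw [this, phiR_sq]; ring
      constructor
      · rw [hrec, hpow]; linarith
      · rw [hrec, show n+2+1 = n+3 from rfl, hpow2]; linarith

/-- step `i` of `x` crosses the boundary between `k` and `k+1` -/
def CrossAt (x : ℕ → ℤ) (i : ℕ) (k : ℤ) : Prop :=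
  (x i = k ∧ x (i+1) = k+1) ∨ (x i = k+1 ∧ x (i+1) = k)

/-- discrete IVT, upward crossing -/
lemma ivt_up (x : ℕ → ℤ) (hstep : ∀ i, |x (i+1) - x i| ≤ 1) :
    ∀ b a k, a ≤ b → x a ≤ k → k + 1 ≤ x b →
      ∃ i, a ≤ i ∧ i < b ∧ x i = k ∧ x (i+1) = k + 1 := by
  intro b
  induction b with
  | zero =>
    intro a k ha h1 h2
    interval_cases a
    omega
  | succ b ih =>
    intro a k ha h1 h2
    rcases Nat.lt_or_ge a (b+1) with h | h
    · -- a ≤ b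
      rcases le_or_gt (x b) k with hx | hx
      · refine ⟨b, by omega, by omega, ?_, ?_⟩ <;>
          (have h := abs_le.mp (hstep b); omega)
      · obtain ⟨i, h1', h2', h3'⟩ := ih a k (by omega) h1 (by omega)
        exact ⟨i, h1', by omega, h3'⟩
    · -- a = b+1 : contradiction
      have : a = b + 1 := by omega
      subst this
      omega

/-- discrete IVT, downward crossing -/
lemma ivt_down (x : ℕ → ℤ) (hstep : ∀ i, |x (i+1) - x i| ≤ 1) :
    ∀ b a k, a ≤ b → k + 1 ≤ x a → x b ≤ k →
      ∃ i, a ≤ i ∧ i < b ∧ x i = k + 1 ∧ x (i+1) = k := by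
  intro b a k hab h1 h2
  have hstep' : ∀ i, |(fun j => -x j) (i+1) - (fun j => -x j) i| ≤ 1 := by
    intro i
    simp only
    rw [show (-x (i+1)) - (-x i) = -(x (i+1) - x i) by ring, abs_neg]
    exact hstep i
  obtain ⟨i, hi1, hi2, hi3, hi4⟩ := ivt_up (fun j => -x j) hstep' b a (-(k+1))
    hab (by simp; omega) (by simp; omega)
  exact ⟨i, hi1, hi2, by simp at hi3 hi4; omega⟩

/-- Main 1-D lemma: with every boundary crossed at most twice, an up-run then
down-run then up-run then a further down-step is impossible. -/
lemma one_d_lemma (x : ℕ → ℤ) (n t u v : ℕ)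
    (h0 : x 0 = 0)
    (hstep : ∀ i, |x (i+1) - x i| ≤ 1)
    (hcross : ∀ k : ℤ, ∀ i j l : ℕ, i < j → j < l → l < n →
      CrossAt x i k → CrossAt x j k → CrossAt x l k → False)
    (htu : t < u) (huv : u < v) (hvn : v < n)
    (hmono1 : ∀ i, i < t → x i ≤ x (i+1))
    (hA : 1 ≤ x t)
    (ht : x (t+1) = x t - 1)
    (hmono2 : ∀ i, t < i → i < u → x (i+1) ≤ x i)
    (hu : x (u+1) = x u + 1)
    (hmono3 : ∀ i, u < i → i < v → x i ≤ x (i+1))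
    (hv : x (v+1) = x v - 1) : False := by
  -- x is non-increasing on [t, u]
  have hBle : ∀ i, t ≤ i → i ≤ u → x i ≤ x (t+1) + (0:ℤ) ∨ True := fun _ _ _ => Or.inr trivial
  have hdown : ∀ i, t + 1 ≤ i → i ≤ u → x i ≤ x t - 1 := by
    intro i h1 h2
    induction i with
    | zero => omega
    | succ i ih =>
      rcases Nat.lt_or_ge i (t+1) with h | h
      · have : i = t := by omega
        subst this; omega
      · have := hmono2 i (by omega) (by omega)
        have := ih (by omega) (by omega)
        omega
  have hup3 : ∀ i, u + 1 ≤ i → i ≤ v → x u + 1 ≤ x i := by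
    intro i h1 h2
    induction i with
    | zero => omega
    | succ i ih =>
      rcases Nat.lt_or_ge i (u+1) with h | h
      · have : i = u := by omega
        subst this; omega
      · have := hmono3 i (by omega) (by omega)
        have := ih (by omega) (by omega)
        omega
  have hB : x u ≤ x t - 1 := hdown u (by omega) (by omega)
  have hC : x u + 1 ≤ x v := hup3 v (by omega) (by omega)
  rcases le_or_gt 1 (x v) with hCpos | hCnonpos
  · -- k = max (x u) 0
    set k : ℤ := max (x u) 0 with hk
    have hk1 : x u ≤ k := le_max_left _ _
    have hk0 : (0:ℤ) ≤ k := le_max_right _ _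
    have hkA : k + 1 ≤ x t := by
      rcases max_cases (x u) 0 with ⟨h1, h2⟩ | ⟨h1, h2⟩ <;> omega
    have hkC : k + 1 ≤ x v := by
      rcases max_cases (x u) 0 with ⟨h1, h2⟩ | ⟨h1, h2⟩ <;> omega
    obtain ⟨i, hi1, hi2, hi3, hi4⟩ := ivt_up x hstep t 0 k (by omega) (by omega) hkA
    obtain ⟨j, hj1, hj2, hj3, hj4⟩ := ivt_down x hstep u t k (by omega) hkA hk1
    obtain ⟨l, hl1, hl2, hl3, hl4⟩ := ivt_up x hstep v u k (by omega) hk1 hkC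
    exact hcross k i j l (by omega) (by omega) (by omega)
      (Or.inl ⟨hi3, hi4⟩) (Or.inr ⟨hj3, hj4⟩) (Or.inl ⟨hl3, hl4⟩)
  · -- x v ≤ 0, boundary k = x v - 1
    set k : ℤ := x v - 1 with hk
    obtain ⟨j, hj1, hj2, hj3, hj4⟩ := ivt_down x hstep u t k (by omega) (by omega) (by omega)
    obtain ⟨l, hl1, hl2, hl3, hl4⟩ := ivt_up x hstep v u k (by omega) (by omega) (by omega)
    have hvcross : CrossAt x v k := Or.inr ⟨by omega, by omega⟩
    exact hcross k j l v (by omega) (by omega) hvn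
      (Or.inr ⟨hj3, hj4⟩) (Or.inl ⟨hl3, hl4⟩) hvcross
section Walk

variable {n : ℕ} {p : Fin (n+1) → ℤ × Bool}

/-- ℕ-reindexed walk -/
def wq (p : Fin (n+1) → ℤ × Bool) (i : ℕ) : ℤ × Bool := p ⟨min i n, by omega⟩

lemma wq_eq (i : ℕ) (hi : i ≤ n) : wq p i = p ⟨i, by omega⟩ := by
  unfold wq
  congr 1
  exact Fin.ext (by simp [Nat.min_eq_left hi])

lemma wq_zero (h0 : p 0 = ((0:ℤ), false)) : wq p 0 = ((0:ℤ), false) := by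
  rw [wq_eq 0 (by omega)]
  convert h0 using 2
  exact Fin.ext (by simp)

lemma wq_adj (hadj : ∀ i : Fin n, ladderGraph.Adj (p i.castSucc) (p i.succ))
    {i : ℕ} (hi : i < n) : ladderGraph.Adj (wq p i) (wq p (i+1)) := by
  rw [wq_eq i (by omega), wq_eq (i+1) (by omega)]
  have := hadj ⟨i, hi⟩
  convert this using 2 <;> exact Fin.ext (by simp)

lemma wq_inj (hinj : Function.Injective p) {i j : ℕ} (hi : i ≤ n) (hj : j ≤ n)
    (h : wq p i = wq p j) : i = j := by
  rw [wq_eq i hi, wq_eq j hj] at h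
  have := hinj h
  simpa [Fin.ext_iff] using this

/-- first coordinate of the reindexed walk -/
def wx (p : Fin (n+1) → ℤ × Bool) (i : ℕ) : ℤ := (wq p i).1

lemma wx_zero (h0 : p 0 = ((0:ℤ), false)) : wx p 0 = 0 := by
  unfold wx; rw [wq_zero h0]

/-- each step: vertical (x same, rows differ) or horizontal (|Δx|=1, rows same) -/
lemma step_form (hadj : ∀ i : Fin n, ladderGraph.Adj (p i.castSucc) (p i.succ))
    {i : ℕ} (hi : i < n) :
    (wx p (i+1) = wx p i ∧ (wq p i).2 ≠ (wq p (i+1)).2) ∨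
    (|wx p (i+1) - wx p i| = 1 ∧ (wq p i).2 = (wq p (i+1)).2) := by
  have h := wq_adj hadj hi
  rcases h with ⟨h1, h2⟩ | ⟨h1, h2⟩
  · right
    constructor
    · rw [abs_sub_comm]; exact h1
    · exact h2
  · left
    exact ⟨h1.symm, h2⟩

lemma wx_step (hadj : ∀ i : Fin n, ladderGraph.Adj (p i.castSucc) (p i.succ)) (i : ℕ) :
    |wx p (i+1) - wx p i| ≤ 1 := by
  rcases Nat.lt_or_ge i n with hi | hi
  · rcases step_form hadj hi with ⟨h1, _⟩ | ⟨h1, _⟩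
    · rw [h1]; simp
    · omega
  · have : wq p (i+1) = wq p i := by
      unfold wq
      congr 1
      exact Fin.ext (by simp [Nat.min_eq_right hi, Nat.min_eq_right (by omega : n ≤ i + 1)])
    unfold wx
    rw [this]
    simp

/-- a crossing step is horizontal, hence stays in one row -/
lemma cross_same_row (hadj : ∀ i : Fin n, ladderGraph.Adj (p i.castSucc) (p i.succ))
    {i : ℕ} (hi : i < n) {k : ℤ} (hc : CrossAt (wx p) i k) :
    (wq p i).2 = (wq p (i+1)).2 := by
  rcases step_form hadj hi with ⟨h1, _⟩ | ⟨_, h2⟩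
  · exfalso; rcases hc with ⟨a, b⟩ | ⟨a, b⟩ <;> omega
  · exact h2

/-- two crossings of the same boundary in the same row are impossible -/
lemma two_cross_same_row (hinj : Function.Injective p)
    (hadj : ∀ i : Fin n, ladderGraph.Adj (p i.castSucc) (p i.succ))
    {i j : ℕ} (hij : i < j) (hjn : j < n) {k : ℤ}
    (hci : CrossAt (wx p) i k) (hcj : CrossAt (wx p) j k)
    (hrow : (wq p i).2 = (wq p j).2) : False := by
  have hri := cross_same_row hadj (by omega : i < n) hci
  have hrj := cross_same_row hadj hjn hcj
  have hqeq : ∀ a b : ℕ, a ≤ n → b ≤ n → (wq p a).1 = (wq p b).1 →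
      (wq p a).2 = (wq p b).2 → a = b := by
    intro a b ha hb h1 h2
    exact wq_inj hinj ha hb (Prod.ext h1 h2)
  rcases hci with ⟨a1, a2⟩ | ⟨a1, a2⟩ <;> rcases hcj with ⟨b1, b2⟩ | ⟨b1, b2⟩
  · -- up, up : q i = q j
    have := hqeq i j (by omega) (by omega) (show wx p i = wx p j by omega) hrow
    omega
  · -- up, down : q i = q (j+1)
    have := hqeq i (j+1) (by omega) (by omega) (show wx p i = wx p (j+1) by omega) (by rw [hrow]; exact hrj)
    omega
  · -- down, up : q (i+1) = q j and q i = q (j+1)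
    have h1 := hqeq (i+1) j (by omega) (by omega) (show wx p (i+1) = wx p j by omega) (by rw [← hri]; exact hrow)
    have h2 := hqeq i (j+1) (by omega) (by omega) (show wx p i = wx p (j+1) by omega) (by rw [hrow]; exact hrj)
    omega
  · -- down, down : q (i+1) = q (j+1)
    have := hqeq (i+1) (j+1) (by omega) (by omega) (show wx p (i+1) = wx p (j+1) by omega) (by rw [← hri, ← hrj]; exact hrow)
    omega

/-- every boundary is crossed at most twice -/
lemma cross_bound (hinj : Function.Injective p)
    (hadj : ∀ i : Fin n, ladderGraph.Adj (p i.castSucc) (p i.succ))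
    (k : ℤ) (i j l : ℕ) (hij : i < j) (hjl : j < l) (hln : l < n)
    (hci : CrossAt (wx p) i k) (hcj : CrossAt (wx p) j k) (hcl : CrossAt (wx p) l k) :
    False := by
  have hri : (wq p i).2 = (wq p (i+1)).2 := cross_same_row hadj (by omega) hci
  have hrj : (wq p j).2 = (wq p (j+1)).2 := cross_same_row hadj (by omega) hcj
  have hrl : (wq p l).2 = (wq p (l+1)).2 := cross_same_row hadj hln hcl
  by_cases h1 : (wq p i).2 = (wq p j).2
  · exact two_cross_same_row hinj hadj hij (by omega) hci hcj h1
  · by_cases h2 : (wq p j).2 = (wq p l).2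
    · exact two_cross_same_row hinj hadj hjl hln hcj hcl h2
    · have h3 : (wq p i).2 = (wq p l).2 := by
        cases hb1 : (wq p i).2 <;> cases hb2 : (wq p j).2 <;> cases hb3 : (wq p l).2 <;>
          simp_all
      exact two_cross_same_row hinj hadj (by omega) hln hci hcl h3

end Walk
/-- generic structural lemma : no 3 direction reversals -/
lemma struct_lemma (x : ℕ → ℤ) (n : ℕ)
    (h0 : x 0 = 0) (hstep : ∀ i, |x (i+1) - x i| ≤ 1)
    (hcross : ∀ k : ℤ, ∀ i j l : ℕ, i < j → j < l → l < n →
      CrossAt x i k → CrossAt x j k → CrossAt x l k → False)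
    (i0 c1 c2 c3 : ℕ) (hi0 : i0 < c1) (h12 : c1 < c2) (h23 : c2 < c3) (h3n : c3 < n)
    (hDi0 : x (i0+1) = x i0 + 1) (hDc1 : x (c1+1) = x c1 - 1)
    (hDc2 : x (c2+1) = x c2 + 1) (hDc3 : x (c3+1) = x c3 - 1)
    (hb1 : ∀ j, j < c1 → x j ≤ x (j+1))
    (hb2 : ∀ j, c1 < j → j < c2 → x (j+1) ≤ x j)
    (hb3 : ∀ j, c2 < j → j < c3 → x j ≤ x (j+1)) : False := by
  have hpre : ∀ b, b ≤ c1 → ∀ a, a ≤ b → x a ≤ x b := by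
    intro b
    induction b with
    | zero => intro _ a ha; interval_cases a; omega
    | succ b ih =>
      intro hb a ha
      rcases Nat.lt_or_ge a (b+1) with h | h
      · have h1 := ih (by omega) a (by omega)
        have h2 := hb1 b (by omega)
        omega
      · have : a = b + 1 := by omega
        subst this; omega
  have hA : 1 ≤ x c1 := by
    have h1 := hpre i0 (by omega) 0 (by omega)
    have h2 := hpre c1 (by omega) (i0+1) (by omega)
    omega
  exact one_d_lemma x n c1 c2 c3 h0 hstep hcross h12 h23 h3n
    (fun j hj => hb1 j hj) hA hDc1 hb2 hDc2 hb3 hDc3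

/-- negated-crossing transfer -/
lemma cross_neg (x : ℕ → ℤ) (i : ℕ) (k : ℤ) (h : CrossAt (fun j => -x j) i k) :
    CrossAt x i (-(k+1)) := by
  unfold CrossAt at *
  simp only at h
  omega

/-- structural lemma, both signs, phrased by pattern value d -/
lemma struct_lemma_signed (x : ℕ → ℤ) (n : ℕ) (d : ℤ) (hd : d = 1 ∨ d = -1)
    (h0 : x 0 = 0) (hstep : ∀ i, |x (i+1) - x i| ≤ 1)
    (hcross : ∀ k : ℤ, ∀ i j l : ℕ, i < j → j < l → l < n →
      CrossAt x i k → CrossAt x j k → CrossAt x l k → False)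
    (i0 c1 c2 c3 : ℕ) (hi0 : i0 < c1) (h12 : c1 < c2) (h23 : c2 < c3) (h3n : c3 < n)
    (hDi0 : x (i0+1) = x i0 + d) (hDc1 : x (c1+1) = x c1 - d)
    (hDc2 : x (c2+1) = x c2 + d) (hDc3 : x (c3+1) = x c3 - d)
    (hb1 : ∀ j, j < c1 → x (j+1) = x j ∨ x (j+1) = x j + d)
    (hb2 : ∀ j, c1 < j → j < c2 → x (j+1) = x j ∨ x (j+1) = x j - d)
    (hb3 : ∀ j, c2 < j → j < c3 → x (j+1) = x j ∨ x (j+1) = x j + d) : False := by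
  rcases hd with rfl | rfl
  · exact struct_lemma x n h0 hstep hcross i0 c1 c2 c3 hi0 h12 h23 h3n
      hDi0 hDc1 hDc2 hDc3
      (fun j hj => by rcases hb1 j hj with h | h <;> omega)
      (fun j hj1 hj2 => by rcases hb2 j hj1 hj2 with h | h <;> omega)
      (fun j hj1 hj2 => by rcases hb3 j hj1 hj2 with h | h <;> omega)
  · refine struct_lemma (fun j => -x j) n (by simp [h0]) ?_ ?_ i0 c1 c2 c3 hi0 h12 h23 h3n
      (by omega) (by omega) (by omega) (by omega)
      (fun j hj => by rcases hb1 j hj with h | h <;> (simp; omega))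
      (fun j hj1 hj2 => by rcases hb2 j hj1 hj2 with h | h <;> (simp; omega))
      (fun j hj1 hj2 => by rcases hb3 j hj1 hj2 with h | h <;> (simp; omega))
    · intro i
      rw [show -x (i+1) - -x i = -(x (i+1) - x i) by ring, abs_neg]
      exact hstep i
    · intro k i j l h1 h2 h3 hc1 hc2 hc3
      exact hcross (-(k+1)) i j l h1 h2 h3 (cross_neg x i k hc1) (cross_neg x j k hc2)
        (cross_neg x l k hc3)

section Code

variable {n : ℕ}

def Hset (D : Fin n → ℤ) : Finset (Fin n) := Finset.univ.filter (fun j => D j ≠ 0)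

def dval (D : Fin n → ℤ) : ℤ :=
  if hH : (Hset D).Nonempty then D ((Hset D).min' hH) else 0

def H1set (D : Fin n → ℤ) : Finset (Fin n) :=
  Finset.univ.filter (fun j => D j ≠ 0 ∧ D j ≠ dval D)

def m1val (D : Fin n → ℤ) : Option (Fin n) :=
  if h1 : (H1set D).Nonempty then some ((H1set D).min' h1) else none

def H2set (D : Fin n → ℤ) (m1 : Fin n) : Finset (Fin n) :=
  Finset.univ.filter (fun j => D j = dval D ∧ m1 < j)

def m2val (D : Fin n → ℤ) : Option (Fin n) :=
  match m1val D with
  | none => none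
  | some m1 =>
    if h2 : (H2set D m1).Nonempty then some ((H2set D m1).min' h2) else none

def codeOf (D : Fin n → ℤ) : Bool × Option (Fin n) × Option (Fin n) :=
  (decide (dval D = 1), m1val D, m2val D)

def recBase (b : Bool) : ℤ := if b then 1 else -1

def reconDir (c : Bool × Option (Fin n) × Option (Fin n)) (i : Fin n) : ℤ :=
  match c.2.1, c.2.2 with
  | none, _ => recBase c.1
  | some m1, none => if m1 ≤ i then -recBase c.1 else recBase c.1
  | some m1, some m2 =>
      if m2 ≤ i then recBase c.1 else if m1 ≤ i then -recBase c.1 else recBase c.1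

lemma mem_Hset {D : Fin n → ℤ} {j : Fin n} : j ∈ Hset D ↔ D j ≠ 0 := by
  simp [Hset]

lemma mem_H1set {D : Fin n → ℤ} {j : Fin n} : j ∈ H1set D ↔ D j ≠ 0 ∧ D j ≠ dval D := by
  simp [H1set]

lemma mem_H2set {D : Fin n → ℤ} {m1 j : Fin n} :
    j ∈ H2set D m1 ↔ D j = dval D ∧ m1 < j := by
  simp [H2set]

lemma dval_spec {D : Fin n → ℤ} (hH : (Hset D).Nonempty) :
    dval D = D ((Hset D).min' hH) := by
  rw [dval, dif_pos hH]

lemma m1val_none {D : Fin n → ℤ} (h : m1val D = none) : ∀ j, j ∉ H1set D := by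
  rw [m1val] at h
  split at h
  · exact absurd h (by simp)
  · next h1 => intro j hj; exact h1 ⟨j, hj⟩

lemma m1val_some {D : Fin n → ℤ} {m1 : Fin n} (h : m1val D = some m1) :
    m1 ∈ H1set D ∧ ∀ j ∈ H1set D, m1 ≤ j := by
  rw [m1val] at h
  split at h
  · next h1 =>
      obtain rfl : (H1set D).min' h1 = m1 := by injection h
      exact ⟨Finset.min'_mem _ _, fun j hj => Finset.min'_le _ _ hj⟩
  · exact absurd h (by simp)

lemma m2val_none {D : Fin n → ℤ} {m1 : Fin n} (hm1 : m1val D = some m1)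
    (h : m2val D = none) : ∀ j, j ∉ H2set D m1 := by
  simp only [m2val, hm1] at h
  split at h
  · exact absurd h (by simp)
  · next h2 => intro j hj; exact h2 ⟨j, hj⟩

lemma m2val_some {D : Fin n → ℤ} {m1 m2 : Fin n} (hm1 : m1val D = some m1)
    (h : m2val D = some m2) : m2 ∈ H2set D m1 ∧ ∀ j ∈ H2set D m1, m2 ≤ j := by
  simp only [m2val, hm1] at h
  split at h
  · next h2 =>
      obtain rfl : (H2set D m1).min' h2 = m2 := by injection h
      exact ⟨Finset.min'_mem _ _, fun j hj => Finset.min'_le _ _ hj⟩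
  · exact absurd h (by simp)

theorem recon (D : Fin n → ℤ) (hD : ∀ i, D i = 0 ∨ D i = 1 ∨ D i = -1)
    (hS : ∀ d : ℤ, (d = 1 ∨ d = -1) → ∀ i0 c1 c2 c3 : Fin n,
      i0 < c1 → c1 < c2 → c2 < c3 →
      D i0 = d → D c1 = -d → D c2 = d → D c3 = -d →
      (∀ j, j < c1 → D j = 0 ∨ D j = d) →
      (∀ j, c1 < j → j < c2 → D j = 0 ∨ D j = -d) →
      (∀ j, c2 < j → j < c3 → D j = 0 ∨ D j = d) → False)
    (i : Fin n) (hi : D i ≠ 0) : D i = reconDir (codeOf D) i := by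
  classical
  have hH : (Hset D).Nonempty := ⟨i, mem_Hset.mpr hi⟩
  set i0 := (Hset D).min' hH with hi0def
  have hd0 : dval D = D i0 := dval_spec hH
  have hdc : dval D = 1 ∨ dval D = -1 := by
    have h1 := hD i0
    have h2 : D i0 ≠ 0 := mem_Hset.mp (Finset.min'_mem _ _)
    rw [hd0]; omega
  have hbase : recBase (decide (dval D = 1)) = dval D := by
    rcases hdc with h | h <;> simp [recBase, h]
  -- key facts
  rcases hm1 : m1val D with _ | m1
  · -- no reversal at all: D i = dval D
    have hiH1 : i ∉ H1set D := m1val_none hm1 i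
    rw [mem_H1set] at hiH1
    have : D i = dval D := by tauto
    rw [this]
    simp only [reconDir, codeOf, hm1]
    rw [hbase]
  · have ⟨hm1mem, hm1min⟩ := m1val_some hm1
    rw [mem_H1set] at hm1mem
    have hDm1 : D m1 = -(dval D) := by
      have := hD m1
      rcases hdc with h | h <;> omega
    have hi0m1 : i0 < m1 := by
      have h1 : i0 ≤ m1 := Finset.min'_le _ _ (mem_Hset.mpr hm1mem.1)
      rcases lt_or_eq_of_le h1 with h | h
      · exact h
      · exfalso
        rw [← h] at hDm1
        rw [← hd0] at hDm1
        rcases hdc with hh | hh <;> omega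
    have hlow : ∀ j : Fin n, j < m1 → D j = 0 ∨ D j = dval D := by
      intro j hj
      by_cases h0 : D j = 0
      · exact Or.inl h0
      by_cases hdd : D j = dval D
      · exact Or.inr hdd
      · exfalso
        have := hm1min j (mem_H1set.mpr ⟨h0, hdd⟩)
        exact absurd hj (not_lt.mpr this)
    rcases hm2 : m2val D with _ | m2
    · -- one reversal
      have hH2 : ∀ j, ¬(D j = dval D ∧ m1 < j) := by
        intro j hj
        exact m2val_none hm1 hm2 j (mem_H2set.mpr hj)
      have hrec : reconDir (codeOf D) i =
          if m1 ≤ i then -(dval D) else dval D := by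
        simp only [reconDir, codeOf, hm1, hm2]
        rw [hbase]
      rw [hrec]
      by_cases him : m1 ≤ i
      · rw [if_pos him]
        rcases lt_or_eq_of_le him with h | h
        · -- m1 < i : D i ≠ dval D since H2 empty
          have h1 : D i ≠ dval D := fun hc => hH2 i ⟨hc, h⟩
          have := hD i
          rcases hdc with hh | hh <;> omega
        · rw [← h]; exact hDm1
      · rw [if_neg him]
        rcases hlow i (lt_of_not_ge him) with h | h
        · exact absurd h hi
        · exact h
    · -- two reversals recorded
      have ⟨hm2mem, hm2min⟩ := m2val_some hm1 hm2
      rw [mem_H2set] at hm2mem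
      have hmid : ∀ j : Fin n, m1 < j → j < m2 → D j = 0 ∨ D j = -(dval D) := by
        intro j hj1 hj2
        by_cases h0 : D j = 0
        · exact Or.inl h0
        by_cases hdd : D j = dval D
        · exfalso
          have := hm2min j (mem_H2set.mpr ⟨hdd, hj1⟩)
          exact absurd hj2 (not_lt.mpr this)
        · have := hD j
          rcases hdc with hh | hh <;> omega
      have hrec : reconDir (codeOf D) i =
          if m2 ≤ i then dval D else if m1 ≤ i then -(dval D) else dval D := by
        simp only [reconDir, codeOf, hm1, hm2]
        rw [hbase]
      rw [hrec]
      by_cases h2i : m2 ≤ i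
      · rw [if_pos h2i]
        by_contra hne
        have hDi : D i = -(dval D) := by
          have := hD i
          rcases hdc with hh | hh <;> omega
        have h2lt : m2 < i := by
          rcases lt_or_eq_of_le h2i with h | h
          · exact h
          · exfalso; rw [← h] at hDi; rcases hdc with hh | hh <;> omega
        -- third change: contradiction via hS
        have hH3ne : (Finset.univ.filter (fun j => D j = -(dval D) ∧ m2 < j)).Nonempty :=
          ⟨i, by simp [hDi, h2lt]⟩
        set c3 := (Finset.univ.filter (fun j => D j = -(dval D) ∧ m2 < j)).min' hH3ne with hc3
        have hc3mem : D c3 = -(dval D) ∧ m2 < c3 := by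
          have h := Finset.min'_mem _ hH3ne
          rw [Finset.mem_filter] at h
          rw [hc3]
          exact h.2
        have hhigh : ∀ j : Fin n, m2 < j → j < c3 → D j = 0 ∨ D j = dval D := by
          intro j hj1 hj2
          by_cases h0 : D j = 0
          · exact Or.inl h0
          by_cases hdd : D j = -(dval D)
          · exfalso
            have := Finset.min'_le _ j (by simp [hdd, hj1] :
              j ∈ Finset.univ.filter (fun j => D j = -(dval D) ∧ m2 < j))
            exact absurd hj2 (not_lt.mpr this)
          · have := hD j
            rcases hdc with hh | hh <;> omega
        exact hS (dval D) hdc i0 m1 m2 c3 hi0m1 hm2mem.2 hc3mem.2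
          hd0.symm hDm1 hm2mem.1 hc3mem.1 hlow hmid hhigh
      · rw [if_neg h2i]
        by_cases him : m1 ≤ i
        · rw [if_pos him]
          rcases lt_or_eq_of_le him with h | h
          · by_cases hdd : D i = dval D
            · exfalso
              have := hm2min i (mem_H2set.mpr ⟨hdd, h⟩)
              exact h2i this
            · have := hD i
              rcases hdc with hh | hh <;> omega
          · rw [← h]; exact hDm1
        · rw [if_neg him]
          rcases hlow i (lt_of_not_ge him) with h | h
          · exact absurd h hi
          · exact h

end Code

section Assemble

variable {n : ℕ}

/-- The subtype of n-step SAWs -/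
abbrev SawT (n : ℕ) := {p : Fin (n + 1) → ℤ × Bool // p 0 = (0, false) ∧ Function.Injective p ∧
    ∀ i : Fin n, ladderGraph.Adj (p i.castSucc) (p i.succ)}

/-- step displacement sequence -/
def Dseq (p : Fin (n+1) → ℤ × Bool) (i : Fin n) : ℤ := wx p (↑i + 1) - wx p ↑i

lemma Dseq_cases (p : Fin (n+1) → ℤ × Bool)
    (hadj : ∀ i : Fin n, ladderGraph.Adj (p i.castSucc) (p i.succ)) (i : Fin n) :
    Dseq p i = 0 ∨ Dseq p i = 1 ∨ Dseq p i = -1 := by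
  rcases step_form hadj i.isLt with ⟨h1, _⟩ | ⟨h1, _⟩
  · left; unfold Dseq; omega
  · have h2 := (abs_eq (by norm_num : (0:ℤ) ≤ 1)).mp h1
    unfold Dseq; omega

lemma Dseq_vert (p : Fin (n+1) → ℤ × Bool)
    (hadj : ∀ i : Fin n, ladderGraph.Adj (p i.castSucc) (p i.succ)) (i : Fin n)
    (h : Dseq p i = 0) :
    (wq p (↑i+1)).1 = (wq p ↑i).1 ∧ (wq p (↑i+1)).2 = !(wq p ↑i).2 := by
  rcases step_form hadj i.isLt with ⟨h1, h2⟩ | ⟨h1, h2⟩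
  · refine ⟨h1, ?_⟩
    cases hb : (wq p (↑i : ℕ)).2 <;> cases hb2 : (wq p ((↑i : ℕ)+1)).2 <;> simp_all
  · exfalso
    have h3 := (abs_eq (by norm_num : (0:ℤ) ≤ 1)).mp h1
    unfold Dseq at h; omega

lemma Dseq_horiz (p : Fin (n+1) → ℤ × Bool)
    (hadj : ∀ i : Fin n, ladderGraph.Adj (p i.castSucc) (p i.succ)) (i : Fin n)
    (h : Dseq p i ≠ 0) :
    (wq p (↑i+1)).1 = (wq p ↑i).1 + Dseq p i ∧ (wq p (↑i+1)).2 = (wq p ↑i).2 := by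
  constructor
  · unfold Dseq wx at *; omega
  · rcases step_form hadj i.isLt with ⟨h1, h2⟩ | ⟨h1, h2⟩
    · exfalso; unfold Dseq at h; omega
    · exact h2.symm

/-- the structural hypothesis holds for walk displacement sequences -/
lemma walk_hS (p : Fin (n+1) → ℤ × Bool) (h0 : p 0 = (0, false))
    (hinj : Function.Injective p)
    (hadj : ∀ i : Fin n, ladderGraph.Adj (p i.castSucc) (p i.succ)) :
    ∀ d : ℤ, (d = 1 ∨ d = -1) → ∀ i0 c1 c2 c3 : Fin n,
      i0 < c1 → c1 < c2 → c2 < c3 →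
      Dseq p i0 = d → Dseq p c1 = -d → Dseq p c2 = d → Dseq p c3 = -d →
      (∀ j, j < c1 → Dseq p j = 0 ∨ Dseq p j = d) →
      (∀ j, c1 < j → j < c2 → Dseq p j = 0 ∨ Dseq p j = -d) →
      (∀ j, c2 < j → j < c3 → Dseq p j = 0 ∨ Dseq p j = d) → False := by
  intro d hd i0 c1 c2 c3 h01 h12 h23 hD0 hD1 hD2 hD3 hb1 hb2 hb3
  refine struct_lemma_signed (wx p) n d hd (wx_zero h0) (wx_step hadj)
    (fun k i j l hij hjl hln hci hcj hcl => cross_bound hinj hadj k i j l hij hjl hln hci hcj hcl)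
    i0 c1 c2 c3 h01 h12 h23 c3.isLt ?_ ?_ ?_ ?_ ?_ ?_ ?_
  · unfold Dseq at hD0; omega
  · unfold Dseq at hD1; omega
  · unfold Dseq at hD2; omega
  · unfold Dseq at hD3; omega
  · intro j hj
    have hjn : j < n := lt_trans hj c1.isLt
    have h := hb1 ⟨j, hjn⟩ (by simpa [Fin.lt_def] using hj)
    have h2 : wx p (j+1) - wx p j = 0 ∨ wx p (j+1) - wx p j = d := h
    omega
  · intro j hj1 hj2
    have hjn : j < n := lt_trans hj2 c2.isLt
    have h := hb2 ⟨j, hjn⟩ (by simpa [Fin.lt_def] using hj1) (by simpa [Fin.lt_def] using hj2)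
    have h2 : wx p (j+1) - wx p j = 0 ∨ wx p (j+1) - wx p j = -d := h
    omega
  · intro j hj1 hj2
    have hjn : j < n := lt_trans hj2 c3.isLt
    have h := hb3 ⟨j, hjn⟩ (by simpa [Fin.lt_def] using hj1) (by simpa [Fin.lt_def] using hj2)
    have h2 : wx p (j+1) - wx p j = 0 ∨ wx p (j+1) - wx p j = d := h
    omega

end Assemble

section Phi

variable {n : ℕ}

/-- vertical-step indicator -/
def vposOf (p : Fin (n+1) → ℤ × Bool) : Fin n → Bool := fun i => decide (Dseq p i = 0)

lemma vposOf_noTwo (p : Fin (n+1) → ℤ × Bool)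
    (hinj : Function.Injective p)
    (hadj : ∀ i : Fin n, ladderGraph.Adj (p i.castSucc) (p i.succ)) :
    NoTwo (vposOf p) := by
  intro i h hc
  obtain ⟨hc1, hc2⟩ := hc
  have h1 : Dseq p ⟨i, by omega⟩ = 0 := by simpa [vposOf] using hc1
  have h2 : Dseq p ⟨i+1, h⟩ = 0 := by simpa [vposOf] using hc2
  obtain ⟨ha1, ha2⟩ := Dseq_vert p hadj _ h1
  obtain ⟨hb1, hb2⟩ := Dseq_vert p hadj _ h2
  -- wq p (i+1+1) = wq p i
  have hx : (wq p (i+1+1)).1 = (wq p i).1 := by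
    have e1 : (wq p (i+1)).1 = (wq p i).1 := ha1
    have e2 : (wq p (i+1+1)).1 = (wq p (i+1)).1 := hb1
    omega
  have hb : (wq p (i+1+1)).2 = (wq p i).2 := by
    have e1 : (wq p (i+1)).2 = !(wq p i).2 := ha2
    have e2 : (wq p (i+1+1)).2 = !(wq p (i+1)).2 := hb2
    rw [e2, e1, Bool.not_not]
  have : i + 1 + 1 = i := wq_inj hinj (by omega) (by omega) (Prod.ext hx hb)
  omega

/-- data extracted from a walk -/
noncomputable def phiData (s : SawT n) :
    {g : Fin n → Bool // NoTwo g} × (Bool × Option (Fin n) × Option (Fin n)) :=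
  ⟨⟨vposOf s.1, vposOf_noTwo s.1 s.2.2.1 s.2.2.2⟩, codeOf (Dseq s.1)⟩

lemma phiData_injective : Function.Injective (phiData (n := n)) := by
  intro s t hst
  obtain ⟨hs0, hsinj, hsadj⟩ := s.2
  obtain ⟨ht0, htinj, htadj⟩ := t.2
  have hvp : vposOf s.1 = vposOf t.1 := by
    have := congrArg (fun z => z.1.1) hst
    simpa [phiData] using this
  have hcode : codeOf (Dseq s.1) = codeOf (Dseq t.1) := by
    have := congrArg (fun z => z.2) hst
    simpa [phiData] using this
  -- the displacement sequences agree
  have hDeq : ∀ i : Fin n, Dseq s.1 i = Dseq t.1 i := by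
    intro i
    by_cases hz : Dseq s.1 i = 0
    · have : vposOf s.1 i = true := by simp [vposOf, hz]
      rw [hvp] at this
      have : Dseq t.1 i = 0 := by simpa [vposOf] using this
      rw [hz, this]
    · have hz' : Dseq t.1 i ≠ 0 := by
        intro hz'
        have : vposOf t.1 i = true := by simp [vposOf, hz']
        rw [← hvp] at this
        exact hz (by simpa [vposOf] using this)
      rw [recon (Dseq s.1) (Dseq_cases s.1 hsadj) (walk_hS s.1 hs0 hsinj hsadj) i hz,
        recon (Dseq t.1) (Dseq_cases t.1 htadj) (walk_hS t.1 ht0 htinj htadj) i hz', hcode]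
  -- hence the walks agree
  have hq : ∀ i : ℕ, i ≤ n → wq s.1 i = wq t.1 i := by
    intro i
    induction i with
    | zero => intro _; rw [wq_zero hs0, wq_zero ht0]
    | succ i ih =>
      intro hi
      have hin : i < n := by omega
      have he := ih (by omega)
      have hD := hDeq ⟨i, hin⟩
      by_cases hz : Dseq s.1 ⟨i, hin⟩ = 0
      · obtain ⟨ha1, ha2⟩ := Dseq_vert s.1 hsadj _ hz
        obtain ⟨hb1, hb2⟩ := Dseq_vert t.1 htadj _ (by rw [← hD]; exact hz)
        refine Prod.ext ?_ ?_
        · show (wq s.1 (i+1)).1 = (wq t.1 (i+1)).1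
          rw [show ((⟨i, hin⟩ : Fin n) : ℕ) = i from rfl] at ha1 hb1
          rw [ha1, hb1, he]
        · show (wq s.1 (i+1)).2 = (wq t.1 (i+1)).2
          rw [show ((⟨i, hin⟩ : Fin n) : ℕ) = i from rfl] at ha2 hb2
          rw [ha2, hb2, he]
      · obtain ⟨ha1, ha2⟩ := Dseq_horiz s.1 hsadj _ hz
        obtain ⟨hb1, hb2⟩ := Dseq_horiz t.1 htadj _ (by rw [← hD]; exact hz)
        refine Prod.ext ?_ ?_
        · show (wq s.1 (i+1)).1 = (wq t.1 (i+1)).1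
          rw [show ((⟨i, hin⟩ : Fin n) : ℕ) = i from rfl] at ha1 hb1
          rw [ha1, hb1, he, hD]
        · show (wq s.1 (i+1)).2 = (wq t.1 (i+1)).2
          rw [show ((⟨i, hin⟩ : Fin n) : ℕ) = i from rfl] at ha2 hb2
          rw [ha2, hb2, he]
  apply Subtype.ext
  funext j
  have := hq j.1 (by omega)
  rw [wq_eq _ (by omega), wq_eq _ (by omega)] at this
  exact this

instance sawFinite : Finite (SawT n) :=
  Finite.of_injective _ (phiData_injective (n := n))

lemma saw_upper : Nat.card (SawT n) ≤ cardA n * (2 * ((n+1) * (n+1))) := by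
  have h := Nat.card_le_card_of_injective _ (phiData_injective (n := n))
  calc Nat.card (SawT n) ≤ Nat.card ({g : Fin n → Bool // NoTwo g} ×
      (Bool × Option (Fin n) × Option (Fin n))) := h
    _ = cardA n * (2 * ((n+1) * (n+1))) := by
        rw [Nat.card_prod, Nat.card_prod, Nat.card_prod]
        congr 1
        rw [Nat.card_eq_fintype_card, Fintype.card_bool]
        congr 1 <;> rw [Nat.card_eq_fintype_card, Fintype.card_option, Fintype.card_fin]

end Phi

section Stair

/-- staircase walk from a bit sequence: `true` = vertical step, `false` = right step -/
def stair (g : ℕ → Bool) : ℕ → ℤ × Bool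
  | 0 => (0, false)
  | (i+1) => if g i then ((stair g i).1, !(stair g i).2)
             else ((stair g i).1 + 1, (stair g i).2)

lemma stair_mono_step (g : ℕ → Bool) (i : ℕ) : (stair g i).1 ≤ (stair g (i+1)).1 := by
  rw [stair]
  split <;> simp <;> omega

lemma stair_mono (g : ℕ → Bool) : ∀ i j, i ≤ j → (stair g i).1 ≤ (stair g j).1 := by
  intro i j
  induction j with
  | zero => intro h; interval_cases i; omega
  | succ j ih =>
    intro h
    rcases Nat.lt_or_ge i (j+1) with h' | h'
    · exact le_trans (ih (by omega)) (stair_mono_step g j)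
    · have : i = j+1 := by omega
      subst this; omega

lemma stair_vert_run (g : ℕ → Bool) {i j : ℕ} (hij : i ≤ j)
    (hx : (stair g i).1 = (stair g j).1) : ∀ k, i ≤ k → k < j → g k = true := by
  intro k hk1 hk2
  by_contra hf
  have h1 : (stair g (k+1)).1 = (stair g k).1 + 1 := by
    rw [stair, if_neg hf]
  have h2 := stair_mono g i k hk1
  have h3 := stair_mono g (k+1) j (by omega)
  omega

lemma stair_inj (g : ℕ → Bool) (hg : ∀ i, ¬(g i = true ∧ g (i+1) = true)) :
    ∀ i j, i < j → stair g i ≠ stair g j := by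
  intro i j hij heq
  have hx : (stair g i).1 = (stair g j).1 := by rw [heq]
  have hrun := stair_vert_run g (le_of_lt hij) hx
  rcases Nat.lt_or_ge (i+1) j with h | h
  · exact hg i ⟨hrun i (le_refl i) (by omega), hrun (i+1) (by omega) h⟩
  · have : j = i + 1 := by omega
    subst this
    have hgi : g i = true := hrun i (le_refl i) (by omega)
    have : (stair g (i+1)).2 = !(stair g i).2 := by rw [stair, if_pos hgi]
    rw [heq] at this
    simp at this

lemma stair_adj (g : ℕ → Bool) (i : ℕ) : ladderGraph.Adj (stair g i) (stair g (i+1)) := by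
  rw [stair]
  split
  · exact Or.inr ⟨rfl, by simp⟩
  · exact Or.inl ⟨by simp, rfl⟩

variable {n : ℕ}

/-- extend a `Fin n`-indexed bit sequence by `false` -/
def extBits (g : Fin n → Bool) (i : ℕ) : Bool := if h : i < n then g ⟨i, h⟩ else false

lemma extBits_noTwo {g : Fin n → Bool} (hg : NoTwo g) (i : ℕ) :
    ¬(extBits g i = true ∧ extBits g (i+1) = true) := by
  rintro ⟨h1, h2⟩
  unfold extBits at h1 h2
  split at h2
  · next h => exact hg i h ⟨by simpa [extBits, show i < n by omega] using h1, h2⟩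
  · simp at h2

/-- the staircase walk as a SAW -/
def psiMap (g : {g : Fin n → Bool // NoTwo g}) : SawT n := by
  refine ⟨fun j => stair (extBits g.1) j.1, rfl, ?_, ?_⟩
  · intro a b hab
    by_contra hne
    have hne' : a.1 ≠ b.1 := fun h => hne (Fin.ext h)
    rcases Nat.lt_or_ge a.1 b.1 with h | h
    · exact stair_inj _ (extBits_noTwo g.2) a.1 b.1 h hab
    · exact stair_inj _ (extBits_noTwo g.2) b.1 a.1 (by omega) hab.symm
  · intro i
    exact stair_adj (extBits g.1) i.1

lemma psiMap_injective : Function.Injective (psiMap (n := n)) := by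
  intro g h hgh
  apply Subtype.ext
  funext i
  have hw : ∀ j : Fin (n+1), stair (extBits g.1) j.1 = stair (extBits h.1) j.1 := by
    intro j
    exact congrFun (congrArg (fun z => z.1) hgh) j
  have h1 := hw ⟨i.1, by omega⟩
  have h2 := hw ⟨i.1+1, by omega⟩
  -- read off bit i from whether the row flips
  by_contra hne
  have hb : extBits g.1 i.1 ≠ extBits h.1 i.1 := by
    unfold extBits
    rw [dif_pos i.isLt, dif_pos i.isLt]
    simpa using hne
  cases hcg : extBits g.1 i.1 <;> cases hch : extBits h.1 i.1 <;> rw [hcg, hch] at hb <;>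
    try simp at hb
  · -- g bit false, h bit true
    have e1 : stair (extBits g.1) (i.1+1) = ((stair (extBits g.1) i.1).1 + 1,
        (stair (extBits g.1) i.1).2) := by rw [stair, if_neg (by simp [hcg])]
    have e2 : stair (extBits h.1) (i.1+1) = ((stair (extBits h.1) i.1).1,
        !(stair (extBits h.1) i.1).2) := by rw [stair, if_pos hch]
    rw [e1, e2] at h2
    have := congrArg Prod.fst h2
    simp at this
    have := congrArg Prod.fst h1
    simp at this
    omega
  · -- g bit true, h bit false
    have e1 : stair (extBits g.1) (i.1+1) = ((stair (extBits g.1) i.1).1,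
        !(stair (extBits g.1) i.1).2) := by rw [stair, if_pos hcg]
    have e2 : stair (extBits h.1) (i.1+1) = ((stair (extBits h.1) i.1).1 + 1,
        (stair (extBits h.1) i.1).2) := by rw [stair, if_neg (by simp [hch])]
    rw [e1, e2] at h2
    have := congrArg Prod.fst h2
    simp at this
    have := congrArg Prod.fst h1
    simp at this
    omega

lemma saw_lower : cardA n ≤ Nat.card (SawT n) :=
  Nat.card_le_card_of_injective _ (psiMap_injective (n := n))

end Stair

section Analysis

open Filter Real

lemma ladderSawCount_eq_card (n : ℕ) : ladderSawCount n = Nat.card (SawT n) := rfl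

lemma count_lower (n : ℕ) : phiR ^ n ≤ (ladderSawCount n : ℝ) := by
  have h1 : cardA n ≤ ladderSawCount n := by
    rw [ladderSawCount_eq_card]; exact saw_lower
  have h2 : (Nat.fib (n+2) : ℝ) ≤ (ladderSawCount n : ℝ) := by
    rw [← cardA_eq_fib]
    exact_mod_cast h1
  exact le_trans (fib_bounds n).1 h2

lemma count_upper (n : ℕ) :
    (ladderSawCount n : ℝ) ≤ phiR ^ n * ((2 * phiR) * ((n:ℝ)+1)^2) := by
  have h1 : ladderSawCount n ≤ cardA n * (2 * ((n+1) * (n+1))) := by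
    rw [ladderSawCount_eq_card]; exact saw_upper
  have h2 : (ladderSawCount n : ℝ) ≤ (Nat.fib (n+2) : ℝ) * (2 * (((n:ℝ)+1) * ((n:ℝ)+1))) := by
    rw [← cardA_eq_fib]
    exact_mod_cast h1
  have h3 : (Nat.fib (n+2) : ℝ) * (2 * (((n:ℝ)+1) * ((n:ℝ)+1))) ≤
      phiR ^ (n+1) * (2 * (((n:ℝ)+1) * ((n:ℝ)+1))) := by
    apply mul_le_mul_of_nonneg_right (fib_bounds n).2
    positivity
  calc (ladderSawCount n : ℝ) ≤ (Nat.fib (n+2) : ℝ) * (2 * (((n:ℝ)+1) * ((n:ℝ)+1))) := h2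
    _ ≤ phiR ^ (n+1) * (2 * (((n:ℝ)+1) * ((n:ℝ)+1))) := h3
    _ = phiR ^ n * ((2 * phiR) * ((n:ℝ)+1)^2) := by ring

lemma aux_tendsto_one :
    Tendsto (fun m : ℕ => ((2 * phiR) * ((m:ℝ)+1)^2) ^ ((1:ℝ)/m)) atTop (nhds 1) := by
  have hpos : ∀ m : ℕ, (0:ℝ) < (2 * phiR) * ((m:ℝ)+1)^2 := by
    intro m
    apply mul_pos (by linarith [phiR_pos]) (by positivity)
  have hlog : Tendsto (fun m : ℕ =>
      Real.log ((2 * phiR) * ((m:ℝ)+1)^2) * ((1:ℝ)/m)) atTop (nhds 0) := by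
    have hsplit : ∀ m : ℕ, Real.log ((2 * phiR) * ((m:ℝ)+1)^2) =
        Real.log (2 * phiR) + 2 * Real.log ((m:ℝ)+1) := by
      intro m
      have hp : Real.log (((m:ℝ)+1)^2) = 2 * Real.log ((m:ℝ)+1) := by
        rw [show ((m:ℝ)+1)^2 = ((m:ℝ)+1)^(2:ℕ) from rfl, Real.log_pow]
        norm_num
      rw [Real.log_mul (ne_of_gt (by linarith [phiR_pos] : (0:ℝ) < 2*phiR))
        (by positivity), hp]
    have t1 : Tendsto (fun m : ℕ => Real.log (2 * phiR) * ((1:ℝ)/m)) atTop (nhds 0) := by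
      have := tendsto_one_div_atTop_nhds_zero_nat (𝕜 := ℝ)
      have h := this.const_mul (Real.log (2 * phiR))
      simpa using h
    have t2 : Tendsto (fun m : ℕ => Real.log ((m:ℝ)+1) / ((m:ℝ)+1)) atTop (nhds 0) := by
      have L : Tendsto (fun x : ℝ => Real.log x / x) atTop (nhds 0) :=
        Real.isLittleO_log_id_atTop.tendsto_div_nhds_zero
      have e : Tendsto (fun m : ℕ => (m:ℝ)+1) atTop atTop :=
        tendsto_atTop_add_const_right _ 1 tendsto_natCast_atTop_atTop
      exact L.comp e
    have t3 : Tendsto (fun m : ℕ => ((m:ℝ)+1) * ((1:ℝ)/m)) atTop (nhds 1) := by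
      have h1 : Tendsto (fun m : ℕ => 1 + (1:ℝ)/m) atTop (nhds 1) := by
        have := tendsto_one_div_atTop_nhds_zero_nat.const_add (1:ℝ)
        simpa using this
      apply h1.congr'
      filter_upwards [eventually_ne_atTop 0] with m hm
      have hm' : (m:ℝ) ≠ 0 := Nat.cast_ne_zero.mpr hm
      field_simp
    have t4 : Tendsto (fun m : ℕ => Real.log ((m:ℝ)+1) * ((1:ℝ)/m)) atTop (nhds 0) := by
      have := t2.mul t3
      rw [zero_mul] at this
      apply this.congr
      intro m
      field_simp
    have := t1.add (t4.const_mul 2)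
    norm_num at this
    apply this.congr
    intro m
    rw [hsplit m]
    ring
  have : Tendsto (fun m : ℕ =>
      Real.exp (Real.log ((2 * phiR) * ((m:ℝ)+1)^2) * ((1:ℝ)/m))) atTop (nhds 1) := by
    have := (Real.continuous_exp.tendsto 0).comp hlog
    simpa [Function.comp_def] using this
  apply this.congr
  intro m
  exact (Real.rpow_def_of_pos (hpos m) _).symm

theorem ladder_connective_constant' :
    Tendsto (fun n : ℕ => (ladderSawCount n : ℝ) ^ ((1 : ℝ) / n)) atTop
      (nhds phiR) := by
  have hU : Tendsto (fun m : ℕ => phiR * (((2 * phiR) * ((m:ℝ)+1)^2) ^ ((1:ℝ)/m)))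
      atTop (nhds phiR) := by
    have := aux_tendsto_one.const_mul phiR
    simpa using this
  apply tendsto_of_tendsto_of_tendsto_of_le_of_le' tendsto_const_nhds hU
  · -- lower bound, eventually
    filter_upwards [eventually_ge_atTop 1] with m hm
    have hm0 : (m:ℝ) ≠ 0 := Nat.cast_ne_zero.mpr (by omega)
    have key : (phiR ^ m) ^ ((1:ℝ)/m) = phiR := by
      rw [← Real.rpow_natCast phiR m, ← Real.rpow_mul phiR_pos.le, mul_one_div,
        div_self hm0, Real.rpow_one]
    have h0 : (0:ℝ) ≤ phiR ^ m := pow_nonneg phiR_pos.le m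
    have h := Real.rpow_le_rpow h0 (count_lower m) (by positivity : (0:ℝ) ≤ 1/(m:ℝ))
    rw [key] at h
    exact h
  · -- upper bound, eventually
    filter_upwards [eventually_ge_atTop 1] with m hm
    have hm0 : (m:ℝ) ≠ 0 := Nat.cast_ne_zero.mpr (by omega)
    have key : (phiR ^ m) ^ ((1:ℝ)/m) = phiR := by
      rw [← Real.rpow_natCast phiR m, ← Real.rpow_mul phiR_pos.le, mul_one_div,
        div_self hm0, Real.rpow_one]
    have hA : (0:ℝ) ≤ (2 * phiR) * ((m:ℝ)+1)^2 :=
      mul_nonneg (by linarith [phiR_pos]) (sq_nonneg _)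
    have h := Real.rpow_le_rpow (Nat.cast_nonneg _) (count_upper m)
      (by positivity : (0:ℝ) ≤ 1/(m:ℝ))
    rw [Real.mul_rpow (pow_nonneg phiR_pos.le m) hA, key] at h
    exact h

end Analysis

/-- The connective constant of the ladder graph is the golden mean `(1+√5)/2`. -/
theorem ladder_connective_constant :
    Tendsto (fun n : ℕ => (ladderSawCount n : ℝ) ^ ((1 : ℝ) / n)) atTop
      (nhds ((1 + Real.sqrt 5) / 2)) := by
  rw [show (1 + Real.sqrt 5) / 2 = phiR from rfl]
  exact ladder_connective_constant'
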